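/- arXiv:2505.16126 — 6 statements merged into one kernel-verified Lean document; each statement's English description precedes it below -/
import Mathlib

section
/- Let f : ℝ → ℝ be a nonnegative differentiable function whose derivative f′ is L-Lipschitz for some L > 0. Then for every x ∈ ℝ, (f′(x))² ≤ 2·L·f(x). -/
/-- Descent lemma: a differentiable function with `L`-Lipschitz derivative satisfies
the quadratic upper bound. -/
theorem descent_lemma (f : ℝ → ℝ) (L : ℝ) (hL : 0 < L)
    (hdiff : Differentiable ℝ f)
    (hlip : ∀ x y : ℝ, |deriv f x - deriv f y| ≤ L * |x - y|) (x y : ℝ) :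
    f y ≤ f x + deriv f x * (y - x) + L / 2 * (y - x) ^ 2 := by
  have hcont : Continuous (deriv f) := by
    have : LipschitzWith (Real.toNNReal L) (deriv f) := by
      apply LipschitzWith.of_dist_le_mul
      intro a b
      simpa [Real.dist_eq, Real.coe_toNNReal L hL.le] using hlip a b
    exact this.continuous
  set d := deriv f x with hd
  have hinner : ∀ t : ℝ, HasDerivAt (fun s => x + s * (y - x)) (y - x) t := by
    intro t
    simpa using ((hasDerivAt_id t).mul_const (y - x)).const_add x
  have hg : ∀ t ∈ Set.uIcc (0:ℝ) 1,
      HasDerivAt (fun s => f (x + s * (y - x)))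
        (deriv f (x + t * (y - x)) * (y - x)) t := by
    intro t _
    exact ((hdiff (x + t * (y - x))).hasDerivAt).comp t (hinner t)
  have hcont2 : Continuous (fun t : ℝ => deriv f (x + t * (y - x)) * (y - x)) := by
    exact (hcont.comp (by continuity)).mul continuous_const
  have heq : f y - f x = ∫ t in (0:ℝ)..1, deriv f (x + t * (y - x)) * (y - x) := by
    have := intervalIntegral.integral_eq_sub_of_hasDerivAt hg
      (hcont2.intervalIntegrable 0 1)
    simpa using this.symm
  have heq2 : f y - f x - d * (y - x)
      = ∫ t in (0:ℝ)..1, (deriv f (x + t * (y - x)) - d) * (y - x) := by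
    rw [heq]
    rw [intervalIntegral.integral_mul_const, intervalIntegral.integral_mul_const]
    have : ∫ t in (0:ℝ)..1, (deriv f (x + t * (y - x)) - d)
        = (∫ t in (0:ℝ)..1, deriv f (x + t * (y - x))) - d := by
      have hic : IntervalIntegrable (fun t : ℝ => deriv f (x + t * (y - x)))
          MeasureTheory.volume 0 1 := Continuous.intervalIntegrable
          (hcont.comp (by continuity)) 0 1
      rw [intervalIntegral.integral_sub hic intervalIntegrable_const]
      simp
    rw [this]; ring
  have hbound : f y - f x - d * (y - x) ≤ L / 2 * (y - x) ^ 2 := by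
    rw [heq2]
    calc (∫ t in (0:ℝ)..1, (deriv f (x + t * (y - x)) - d) * (y - x))
        ≤ |∫ t in (0:ℝ)..1, (deriv f (x + t * (y - x)) - d) * (y - x)| := le_abs_self _
      _ ≤ ∫ t in (0:ℝ)..1, |(deriv f (x + t * (y - x)) - d) * (y - x)| := by
          apply intervalIntegral.abs_integral_le_integral_abs (by norm_num)
      _ ≤ ∫ t in (0:ℝ)..1, L * t * (y - x) ^ 2 := by
          apply intervalIntegral.integral_mono_on (by norm_num)
          · exact (((hcont.comp (by continuity)).sub continuous_const).mul
              continuous_const).abs.intervalIntegrable 0 1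
          · exact ((continuous_const.mul continuous_id).mul continuous_const).intervalIntegrable 0 1
          · intro t ht
            rw [abs_mul]
            have h1 : |deriv f (x + t * (y - x)) - d| ≤ L * (t * |y - x|) := by
              have := hlip (x + t * (y - x)) x
              simp only [add_sub_cancel_left] at this
              calc |deriv f (x + t * (y - x)) - d| ≤ L * |t * (y - x)| := this
                _ = L * (t * |y - x|) := by
                    rw [abs_mul, abs_of_nonneg ht.1]
            calc |deriv f (x + t * (y - x)) - d| * |y - x|
                ≤ L * (t * |y - x|) * |y - x| := by
                  apply mul_le_mul_of_nonneg_right h1 (abs_nonneg _)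
              _ = L * t * (y - x) ^ 2 := by
                  rw [← sq_abs (y - x)]; ring
      _ = L / 2 * (y - x) ^ 2 := by
          rw [show (fun t : ℝ => L * t * (y - x) ^ 2) = fun t : ℝ => (L * (y - x) ^ 2) * t from
            by funext t; ring]
          rw [intervalIntegral.integral_const_mul, integral_id]
          ring
  linarith

/-- A nonnegative differentiable function on `ℝ` with `L`-Lipschitz derivative satisfies
`(f'(x))² ≤ 2 L f(x)` everywhere. -/
theorem stmt_1 (f : ℝ → ℝ) (L : ℝ) (hL : 0 < L)
    (hnonneg : ∀ x, 0 ≤ f x)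
    (hdiff : Differentiable ℝ f)
    (hlip : ∀ x y : ℝ, |deriv f x - deriv f y| ≤ L * |x - y|) :
    ∀ x : ℝ, (deriv f x) ^ 2 ≤ 2 * L * f x := by
  intro x
  set d := deriv f x with hd
  have key := descent_lemma f L hL hdiff hlip x (x - d / L)
  have h0 := hnonneg (x - d / L)
  have hL' : L ≠ 0 := ne_of_gt hL
  have : f (x - d / L) ≤ f x - d ^ 2 / (2 * L) := by
    have e1 : x - d / L - x = -(d / L) := by ring
    rw [e1] at key
    calc f (x - d / L) ≤ f x + d * (-(d / L)) + L / 2 * (-(d / L)) ^ 2 := key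
      _ = f x - d ^ 2 / (2 * L) := by field_simp; ring
  have : d ^ 2 / (2 * L) ≤ f x := by linarith
  calc d ^ 2 = 2 * L * (d ^ 2 / (2 * L)) := by field_simp
    _ ≤ 2 * L * f x := by nlinarith
end

section
/- Let E be a finite nonempty set with n = |E| elements, let J : E → ℝ, and let α_min ∈ ℝ with α_min ≤ 1/n. Define the feasible set 𝒜 = { α : E → ℝ | ∑_{e ∈ E} α(e) = 1 and α(e) ≥ α_min for all e ∈ E }. Then the maximum of α ↦ ∑_{e ∈ E} α(e)·J(e) over 𝒜 is attained, and its value equals (1 − α_min·n)·max_{e ∈ E} J(e) + α_min·∑_{e ∈ E} J(e). -/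
open Finset

/-- Closed form of the mm-IRMv1 penalty: the maximum of `α ↦ ∑ α e * J e` over the
extrapolation weights `𝒜 = {α | ∑ α e = 1, α e ≥ α_min}` is attained and equals
`(1 − α_min n) · max J + α_min · ∑ J`. -/
theorem stmt_4 {E : Type*} [Fintype E] [Nonempty E]
    (n : ℕ) (hn : n = Fintype.card E)
    (J : E → ℝ) (αmin : ℝ) (hαmin : αmin ≤ 1 / (n : ℝ)) :
    IsGreatest
      {v : ℝ | ∃ α : E → ℝ, (∑ e, α e = 1) ∧ (∀ e, αmin ≤ α e) ∧ v = ∑ e, α e * J e}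
      ((1 - αmin * (n : ℝ)) * (univ.sup' univ_nonempty J) + αmin * ∑ e, J e) := by
  classical
  have hnpos : 0 < (n : ℝ) := by
    have : 0 < Fintype.card E := Fintype.card_pos
    exact_mod_cast hn ▸ this
  have h1 : αmin * (n : ℝ) ≤ 1 := by
    rw [le_div_iff₀ hnpos] at hαmin; linarith
  obtain ⟨e₀, -, he₀⟩ := Finset.exists_mem_eq_sup' (univ_nonempty (α := E)) J
  have hle : ∀ e : E, J e ≤ univ.sup' univ_nonempty J :=
    fun e => Finset.le_sup' J (mem_univ e)
  constructor
  · refine ⟨fun e => αmin + (if e = e₀ then 1 - αmin * (n : ℝ) else 0), ?_, ?_, ?_⟩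
    · rw [Finset.sum_add_distrib, Finset.sum_ite_eq' univ e₀]
      simp [hn, Finset.card_univ]
      ring
    · intro e; dsimp only; split <;> linarith
    · rw [he₀]
      rw [Finset.sum_congr rfl (fun e _ => by split <;> ring :
        ∀ e ∈ univ, (αmin + (if e = e₀ then 1 - αmin * (n:ℝ) else 0)) * J e
          = αmin * J e + (if e = e₀ then (1 - αmin * (n:ℝ)) * J e else 0))]
      rw [Finset.sum_add_distrib, Finset.sum_ite_eq' univ e₀, ← Finset.mul_sum]
      simp
      ring
  · rintro v ⟨α, hsum, hge, rfl⟩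
    have key : ∀ e ∈ univ, α e * J e ≤ (α e - αmin) * (univ.sup' univ_nonempty J) + αmin * J e := by
      intro e _
      have h2 : (α e - αmin) * J e ≤ (α e - αmin) * (univ.sup' univ_nonempty J) :=
        mul_le_mul_of_nonneg_left (hle e) (by linarith [hge e])
      nlinarith
    calc ∑ e, α e * J e
        ≤ ∑ e, ((α e - αmin) * (univ.sup' univ_nonempty J) + αmin * J e) :=
          Finset.sum_le_sum key
      _ = (1 - αmin * (n : ℝ)) * (univ.sup' univ_nonempty J) + αmin * ∑ e, J e := by
          rw [Finset.sum_add_distrib, ← Finset.sum_mul, ← Finset.mul_sum,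
            Finset.sum_sub_distrib, hsum]
          simp only [Finset.sum_const, Finset.card_univ, nsmul_eq_mul, hn]
          ring
end

section
/- Let E be a finite nonempty set with n = |E| elements, let J : E → ℝ, and let α_min ∈ ℝ. If α : E → ℝ satisfies ∑_{e ∈ E} α(e) = 1 and α(e) ≥ α_min for all e ∈ E, then ∑_{e ∈ E} α(e)·J(e) ≤ (1 − α_min·n)·max_{e ∈ E} J(e) + α_min·∑_{e ∈ E} J(e). -/
open Finset

/-- Upper bound direction of the mm-IRMv1 closed form: any feasible weight vector `α`
(summing to 1 with entries bounded below by `α_min`) satisfies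
`∑ α e * J e ≤ (1 − α_min n) · max J + α_min · ∑ J`. -/
theorem stmt_5 {E : Type*} [Fintype E] [Nonempty E]
    (n : ℕ) (hn : n = Fintype.card E)
    (J : E → ℝ) (αmin : ℝ)
    (α : E → ℝ) (hsum : ∑ e, α e = 1) (hlb : ∀ e, αmin ≤ α e) :
    ∑ e, α e * J e ≤
      (1 - αmin * (n : ℝ)) * (univ.sup' univ_nonempty J) + αmin * ∑ e, J e := by
  set M := univ.sup' univ_nonempty J with hM
  have key : ∀ e, α e * J e ≤ (α e - αmin) * M + αmin * J e := by
    intro e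
    have h1 : J e ≤ M := le_sup' J (mem_univ e)
    nlinarith [hlb e]
  calc ∑ e, α e * J e ≤ ∑ e, ((α e - αmin) * M + αmin * J e) :=
        Finset.sum_le_sum fun e _ => key e
    _ = (1 - αmin * (n : ℝ)) * M + αmin * ∑ e, J e := by
        rw [Finset.sum_add_distrib, ← Finset.sum_mul, ← Finset.mul_sum,
          Finset.sum_sub_distrib, hsum, Finset.sum_const, hn, Finset.card_univ]
        ring
end

section
/- Let E be a finite nonempty set with n = |E| elements, let J : E → ℝ, and let α_min ∈ ℝ with α_min ≤ 1/n. Then there exists α : E → ℝ with ∑_{e ∈ E} α(e) = 1 and α(e) ≥ α_min for all e ∈ E such that ∑_{e ∈ E} α(e)·J(e) = (1 − α_min·n)·max_{e ∈ E} J(e) + α_min·∑_{e ∈ E} J(e). -/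
open Finset

/-- Attainment direction of the mm-IRMv1 closed form: if `α_min ≤ 1/n`, some feasible
weight vector `α` attains `(1 − α_min n) · max J + α_min · ∑ J`. -/
theorem stmt_6 {E : Type*} [Fintype E] [Nonempty E]
    (n : ℕ) (hn : n = Fintype.card E)
    (J : E → ℝ) (αmin : ℝ) (hαmin : αmin ≤ 1 / (n : ℝ)) :
    ∃ α : E → ℝ, (∑ e, α e = 1) ∧ (∀ e, αmin ≤ α e) ∧
      ∑ e, α e * J e =
        (1 - αmin * (n : ℝ)) * (univ.sup' univ_nonempty J) + αmin * ∑ e, J e := by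
  classical
  obtain ⟨e₀, -, he₀⟩ := Finset.exists_mem_eq_sup' (univ_nonempty (α := E)) J
  have hnpos : (0 : ℝ) < n := by
    have : 0 < Fintype.card E := Fintype.card_pos
    rw [hn]; exact_mod_cast this
  have hrem : 0 ≤ 1 - αmin * n := by
    have h1 : (1:ℝ) / n * n = 1 := div_mul_cancel₀ 1 hnpos.ne'
    nlinarith [mul_le_mul_of_nonneg_right hαmin hnpos.le]
  refine ⟨fun e => αmin + if e = e₀ then 1 - αmin * n else 0, ?_, ?_, ?_⟩
  · rw [Finset.sum_add_distrib, Finset.sum_ite_eq' univ e₀, if_pos (mem_univ e₀),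
      Finset.sum_const, Finset.card_univ, ← hn, nsmul_eq_mul]
    ring
  · intro e
    by_cases h : e = e₀ <;> simp [h] <;> linarith
  · have : ∑ e, (αmin + if e = e₀ then 1 - αmin * n else 0) * J e
        = ∑ e, (αmin * J e + (if e = e₀ then (1 - αmin * n) * J e else 0)) := by
      apply Finset.sum_congr rfl; intro e _; by_cases h : e = e₀ <;> simp [h] <;> ring
    rw [this, Finset.sum_add_distrib, Finset.sum_ite_eq', if_pos (mem_univ e₀),
      ← Finset.mul_sum, he₀]
    ring
end

section
/- Let d ≥ 1, let e > 0, and let (Ω, 𝔽, P) be a probability space carrying square-integrable real random variables X_1, …, X_d, V_1, …, V_d, U that are pairwise independent, each with mean 0, with Var(X_i) = e² and Var(V_i) = e² for all i and Var(U) = 1. Define Y = ∑_{i=1}^d X_i + U and, for parameter vectors w_inv, w_spu ∈ ℝ^d, define Ŷ = ∑_{i=1}^d (w_inv)_i X_i + ∑_{i=1}^d (w_spu)_i (Y + V_i). Set s = ∑_{i=1}^d (w_spu)_i. Then E[(Y − Ŷ)²] = (1 − s)² + e²·∑_{i=1}^d ((1 − s) − (w_inv)_i)² + e²·∑_{i=1}^d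 (w_spu)_i². -/
open MeasureTheory ProbabilityTheory

lemma sq_sum_integral {Ω : Type*} [MeasurableSpace Ω] (P : Measure Ω) [IsProbabilityMeasure P]
    {ι : Type*} [Fintype ι] (Z : ι → Ω → ℝ) (c : ι → ℝ)
    (hL2 : ∀ i, MemLp (Z i) 2 P)
    (hindep : ∀ i j, i ≠ j → IndepFun (Z i) (Z j) P)
    (hmean : ∀ i, ∫ ω, Z i ω ∂P = 0) :
    ∫ ω, (∑ i, c i * Z i ω) ^ 2 ∂P = ∑ i, c i ^ 2 * ∫ ω, Z i ω ^ 2 ∂P := by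
  have hint : ∀ i j, Integrable (fun ω => (c i * Z i ω) * (c j * Z j ω)) P := by
    intro i j
    have : (fun ω => (c i * Z i ω) * (c j * Z j ω))
        = fun ω => (c i * c j) * (Z i ω * Z j ω) := by funext ω; ring
    rw [this]
    apply Integrable.const_mul
    rcases eq_or_ne i j with rfl | h
    · simpa [pow_two] using (hL2 i).integrable_sq
    · exact (hindep i j h).integrable_mul ((hL2 i).integrable one_le_two)
        ((hL2 j).integrable one_le_two)
  have expand : ∀ ω, (∑ i, c i * Z i ω) ^ 2
      = ∑ i, ∑ j, (c i * Z i ω) * (c j * Z j ω) := by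
    intro ω
    rw [pow_two, Finset.sum_mul_sum]
  simp_rw [expand]
  rw [integral_finset_sum _ (fun i _ => integrable_finset_sum _ (fun j _ => hint i j))]
  refine Finset.sum_congr rfl fun i _ => ?_
  rw [integral_finset_sum _ (fun j _ => hint i j)]
  rw [Finset.sum_eq_single i]
  · have : (fun ω => (c i * Z i ω) * (c i * Z i ω)) = fun ω => c i ^ 2 * (Z i ω ^ 2) := by
      funext ω; ring
    rw [this, integral_const_mul]
  · intro j _ hj
    have : (fun ω => (c i * Z i ω) * (c j * Z j ω))
        = fun ω => (c i * c j) * (Z i ω * Z j ω) := by funext ω; ring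
    rw [this, integral_const_mul]
    have := (hindep i j hj.symm).integral_mul_eq_mul_integral (hL2 i).aestronglyMeasurable
        (hL2 j).aestronglyMeasurable
    have h2 : ∫ a, Z i a * Z j a ∂P = (∫ a, Z i a ∂P) * ∫ a, Z j a ∂P := this
    rw [h2, hmean i, hmean j]; ring
  · intro h; exact absurd (Finset.mem_univ i) h

/-- Second-moment computation for the SEM of Section 5.1: with pairwise independent,
mean-zero, square-integrable variables `X_i, V_i, U` of variances `e², e², 1`,
label `Y = ∑ X_i + U` and estimate `Ŷ = w_invᵀX + w_spuᵀ(Y·1 + V)`, the mean squared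
error is `(1−s)² + e²∑((1−s) − w_inv i)² + e²∑(w_spu i)²` where `s = ∑ w_spu i`. -/
theorem stmt_11 {Ω : Type*} [MeasurableSpace Ω] (P : Measure Ω) [IsProbabilityMeasure P]
    (d : ℕ) (hd : 1 ≤ d) (e : ℝ) (he : 0 < e)
    (X V : Fin d → Ω → ℝ) (U : Ω → ℝ)
    (Z : (Fin d ⊕ Fin d ⊕ Unit) → Ω → ℝ)
    (hZ : Z = Sum.elim X (Sum.elim V (fun _ => U)))
    (hmeas : ∀ i, Measurable (Z i))
    (hL2 : ∀ i, MemLp (Z i) 2 P)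
    (hindep : ∀ i j, i ≠ j → IndepFun (Z i) (Z j) P)
    (hmean : ∀ i, ∫ ω, Z i ω ∂P = 0)
    (hvarX : ∀ i, variance (X i) P = e ^ 2)
    (hvarV : ∀ i, variance (V i) P = e ^ 2)
    (hvarU : variance U P = 1)
    (w_inv w_spu : Fin d → ℝ)
    (Y : Ω → ℝ) (hY : Y = fun ω => (∑ i, X i ω) + U ω)
    (Yhat : Ω → ℝ)
    (hYhat : Yhat = fun ω => (∑ i, w_inv i * X i ω) + ∑ i, w_spu i * (Y ω + V i ω))
    (s : ℝ) (hs : s = ∑ i, w_spu i) :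
    ∫ ω, (Y ω - Yhat ω) ^ 2 ∂P
      = (1 - s) ^ 2 + e ^ 2 * (∑ i, ((1 - s) - w_inv i) ^ 2)
        + e ^ 2 * ∑ i, (w_spu i) ^ 2 := by
  set c : (Fin d ⊕ Fin d ⊕ Unit) → ℝ :=
    Sum.elim (fun i => (1 - s) - w_inv i) (Sum.elim (fun i => -w_spu i) (fun _ => 1 - s))
    with hc
  have key : ∀ ω, Y ω - Yhat ω = ∑ i, c i * Z i ω := by
    intro ω
    rw [Fintype.sum_sum_type, Fintype.sum_sum_type]
    simp only [hc, hZ, hY, hYhat, hs, Sum.elim_inl, Sum.elim_inr]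
    simp only [Finset.univ_unique, Finset.sum_singleton]
    simp only [mul_add, sub_mul, neg_mul, Finset.sum_add_distrib, Finset.sum_sub_distrib,
      Finset.sum_neg_distrib, ← Finset.sum_mul]
    simp only [one_mul, ← Finset.mul_sum]
    ring
  simp_rw [key]
  rw [sq_sum_integral P Z c hL2 hindep hmean]
  have hZsq : ∀ i, ∫ ω, Z i ω ^ 2 ∂P = variance (Z i) P := by
    intro i
    rw [variance_of_integral_eq_zero (hL2 i).aestronglyMeasurable.aemeasurable (hmean i)]
  simp_rw [hZsq]
  rw [Fintype.sum_sum_type, Fintype.sum_sum_type]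
  simp only [hc, hZ, Sum.elim_inl, Sum.elim_inr, Finset.univ_unique, Finset.sum_singleton,
    hvarX, hvarV, hvarU]
  simp only [neg_sq, mul_one]
  rw [← Finset.sum_mul, ← Finset.sum_mul]
  ring
end

section
/- Let d ≥ 1 and let w_inv, w_spu ∈ ℝ^d. Set s = ∑_{i=1}^d (w_spu)_i and define M : ℝ → ℝ by M(e) = (1 − s)² + e²·( ∑_{i=1}^d ((1 − s) − (w_inv)_i)² + ∑_{i=1}^d (w_spu)_i² ). Then for any e₁, e₂ > 0 with e₁ ≠ e₂, the following are equivalent: (i) M(e₁) = M(e₂); (ii) w_spu = 0 and w_inv = (1, …, 1). Moreover, in that case M(e) = 1 for every e. -/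
/-- Invariance characterization for the SEM of Section 5.1: the mean squared error
`M(e) = (1−s)² + e²(∑((1−s) − w_inv i)² + ∑(w_spu i)²)` agrees at two distinct
environments `e₁ ≠ e₂ > 0` if and only if `w_spu = 0` and `w_inv = (1,…,1)`,
in which case `M(e) = 1` for every `e`. -/
theorem stmt_12 (d : ℕ) (hd : 1 ≤ d) (w_inv w_spu : Fin d → ℝ)
    (s : ℝ) (hs : s = ∑ i, w_spu i)
    (M : ℝ → ℝ)
    (hM : M = fun e : ℝ =>
      (1 - s) ^ 2 + e ^ 2 * ((∑ i, ((1 - s) - w_inv i) ^ 2) + ∑ i, (w_spu i) ^ 2))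
    (e₁ e₂ : ℝ) (h1 : 0 < e₁) (h2 : 0 < e₂) (hne : e₁ ≠ e₂) :
    (M e₁ = M e₂ ↔ (w_spu = 0 ∧ w_inv = fun _ => 1)) ∧
      ((w_spu = 0 ∧ w_inv = fun _ => 1) → ∀ e : ℝ, M e = 1) := by
  subst hM
  have hback : (w_spu = 0 ∧ w_inv = fun _ => 1) → ∀ e : ℝ, (fun e : ℝ =>
      (1 - s) ^ 2 + e ^ 2 * ((∑ i, ((1 - s) - w_inv i) ^ 2) + ∑ i, (w_spu i) ^ 2)) e = 1 := by
    rintro ⟨hspu, hinv⟩ e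
    have hs0 : s = 0 := by simp [hs, hspu]
    simp [hspu, hinv, hs0]
  refine ⟨⟨fun hMeq => ?_, fun h => by rw [hback h e₁, hback h e₂]⟩, hback⟩
  simp only at hMeq
  set A : ℝ := (∑ i, ((1 - s) - w_inv i) ^ 2) + ∑ i, (w_spu i) ^ 2 with hA
  have hE : (e₁ ^ 2 - e₂ ^ 2) * A = 0 := by linarith
  have hE2 : e₁ ^ 2 - e₂ ^ 2 ≠ 0 := by
    intro h
    have : e₁ = e₂ := by nlinarith
    exact hne this
  have hA0 : A = 0 := by
    rcases mul_eq_zero.mp hE with h | h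
    · exact absurd h hE2
    · exact h
  have h1nn : (0:ℝ) ≤ ∑ i, ((1 - s) - w_inv i) ^ 2 :=
    Finset.sum_nonneg fun i _ => sq_nonneg _
  have h2nn : (0:ℝ) ≤ ∑ i, (w_spu i) ^ 2 :=
    Finset.sum_nonneg fun i _ => sq_nonneg _
  have hsum2 : ∑ i, (w_spu i) ^ 2 = 0 := by linarith
  have hsum1 : ∑ i, ((1 - s) - w_inv i) ^ 2 = 0 := by linarith
  have hspu : w_spu = 0 := by
    funext i
    have := (Finset.sum_eq_zero_iff_of_nonneg (fun i _ => sq_nonneg (w_spu i))).mp hsum2 i (Finset.mem_univ i)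
    exact pow_eq_zero_iff (by norm_num) |>.mp this
  have hs0 : s = 0 := by simp [hs, hspu]
  refine ⟨hspu, funext fun i => ?_⟩
  have := (Finset.sum_eq_zero_iff_of_nonneg (fun i _ => sq_nonneg ((1 - s) - w_inv i))).mp hsum1 i (Finset.mem_univ i)
  have h0 : (1 - s) - w_inv i = 0 := pow_eq_zero_iff (by norm_num) |>.mp this
  simp only [hs0] at h0
  linarith
end
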